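/- arXiv:1806.10482 — 3 statements merged into one kernel-verified Lean document; each statement's English description precedes it below -/
import Mathlib

section
/- Under the linear coercivity assumptions, there exists one and only one ū ∈ W_G such that, for all v ∈ W_G, ⟨𝐚(Gū), Gv⟩ + ⟨a(ū), v⟩ = ⟨f, v⟩ − ⟨𝐅, Gv⟩. -/
open NormedSpace Filter Topology

noncomputable section

variable {L Lv : Type*} [NormedAddCommGroup L] [NormedSpace ℝ L]
  [NormedAddCommGroup Lv] [NormedSpace ℝ Lv]

/-- The seminorm `|u|_{L,V} = sup_{μ ∈ V \ {0}} |⟨μ,u⟩| / ‖μ‖` (equal to `0` when `V = {0}`,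
since `sSup ∅ = 0` in `ℝ`). -/
noncomputable def semV (V : Submodule ℝ (StrongDual ℝ L)) (u : L) : ℝ :=
  sSup ((fun μ : StrongDual ℝ L => |μ u| / ‖μ‖) '' {μ : StrongDual ℝ L | μ ∈ V ∧ μ ≠ 0})

/-- `IsWDpair W_G G φ w` says that `φ ∈ 𝐖_D` with `D φ = w`, i.e. the abstract Stokes formula
`⟨φ, G u⟩ + ⟨w, u⟩ = 0` holds for all `u ∈ W_G`. -/
def IsWDpair (WG : Submodule ℝ L) (G : ↥WG →ₗ[ℝ] Lv) (φ : StrongDual ℝ Lv) (w : StrongDual ℝ L) : Prop :=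
  ∀ u : ↥WG, φ (G u) + w (u : L) = 0

/-- A gradient discretisation `𝒟 = (X_𝒟, P_𝒟, G_𝒟)`: a finite-dimensional real vector space
`X`, a function reconstruction `P : X → L` and a gradient reconstruction `Gd : X → Lv`, such
that `v ↦ (|P v|_{L,V}^p + ‖Gd v‖^p)^{1/p}` is a norm on `X` (definiteness is the only
non-automatic condition). -/
structure GradDisc (L Lv : Type*) [NormedAddCommGroup L] [NormedSpace ℝ L]
    [NormedAddCommGroup Lv] [NormedSpace ℝ Lv]
    (V : Submodule ℝ (StrongDual ℝ L)) (p : ℝ) where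
  X : Type
  [instAddCommGroup : AddCommGroup X]
  [instModule : Module ℝ X]
  [instFin : FiniteDimensional ℝ X]
  P : X →ₗ[ℝ] L
  Gd : X →ₗ[ℝ] Lv
  dnorm_definite : ∀ v : X, (semV V (P v) ^ p + ‖Gd v‖ ^ p) ^ (1 / p) = 0 → v = 0

attribute [instance] GradDisc.instAddCommGroup GradDisc.instModule GradDisc.instFin

namespace GradDisc

variable {V : Submodule ℝ (StrongDual ℝ L)} {p : ℝ}

/-- The discrete norm `‖v‖_𝒟 = (|P_𝒟 v|_{L,V}^p + ‖G_𝒟 v‖_Lv^p)^{1/p}`. -/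
noncomputable def dnorm (D : GradDisc L Lv V p) (v : D.X) : ℝ :=
  (semV V (D.P v) ^ p + ‖D.Gd v‖ ^ p) ^ (1 / p)

/-- `C_𝒟 = max_{v ≠ 0} ‖P_𝒟 v‖_L / ‖v‖_𝒟`. -/
noncomputable def CD (D : GradDisc L Lv V p) : ℝ :=
  sSup ((fun v : D.X => ‖D.P v‖ / D.dnorm v) '' {v : D.X | v ≠ 0})

/-- `W_𝒟(φ) = sup_{u ≠ 0} |⟨φ, G_𝒟 u⟩ + ⟨D φ, P_𝒟 u⟩| / ‖u‖_𝒟`, where `w = D φ`. -/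
noncomputable def WDdef (D : GradDisc L Lv V p) (φ : StrongDual ℝ Lv) (w : StrongDual ℝ L) : ℝ :=
  sSup ((fun u : D.X => |φ (D.Gd u) + w (D.P u)| / D.dnorm u) '' {u : D.X | u ≠ 0})

/-- `S_𝒟(φ) = min_v (‖P_𝒟 v − φ‖_L + ‖G_𝒟 v − G φ‖_Lv)`, where `gφ = G φ`. -/
noncomputable def SDdef (D : GradDisc L Lv V p) (φ : L) (gφ : Lv) : ℝ :=
  sInf (Set.range fun v : D.X => ‖D.P v - φ‖ + ‖D.Gd v - gφ‖)

end GradDisc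

/-- Coercivity of a sequence of gradient discretisations: `sup_m C_{𝒟_m} < ∞`. -/
def Coercive {V : Submodule ℝ (StrongDual ℝ L)} {p : ℝ} (D : ℕ → GradDisc L Lv V p) : Prop :=
  ∃ C : ℝ, ∀ m : ℕ, (D m).CD ≤ C

/-- Limit-conformity: `W_{𝒟_m}(φ) → 0` for every `φ ∈ 𝐖_D` (with `w = D φ`). -/
def LimitConforming (WG : Submodule ℝ L) (G : ↥WG →ₗ[ℝ] Lv)
    {V : Submodule ℝ (StrongDual ℝ L)} {p : ℝ} (D : ℕ → GradDisc L Lv V p) : Prop :=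
  ∀ (φ : StrongDual ℝ Lv) (w : StrongDual ℝ L), IsWDpair WG G φ w →
    Filter.Tendsto (fun m => (D m).WDdef φ w) Filter.atTop (𝓝 0)

/-- Consistency: `S_{𝒟_m}(φ) → 0` for every `φ ∈ W_G`. -/
def Consistent (WG : Submodule ℝ L) (G : ↥WG →ₗ[ℝ] Lv)
    {V : Submodule ℝ (StrongDual ℝ L)} {p : ℝ} (D : ℕ → GradDisc L Lv V p) : Prop :=
  ∀ u : ↥WG, Filter.Tendsto (fun m => (D m).SDdef (u : L) (G u)) Filter.atTop (𝓝 0)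

/-- Compactness: bounded discrete sequences have relatively compact reconstructions in `L`. -/
def CompactSeq {V : Submodule ℝ (StrongDual ℝ L)} {p : ℝ} (D : ℕ → GradDisc L Lv V p) : Prop :=
  ∀ u : (m : ℕ) → (D m).X, (∃ C : ℝ, ∀ m : ℕ, (D m).dnorm (u m) ≤ C) →
    IsCompact (closure (Set.range fun m => (D m).P (u m)))


section AuxLM
variable {E : Type*} [NormedAddCommGroup E] [NormedSpace ℝ E]

variable {E : Type*} [NormedAddCommGroup E] [NormedSpace ℝ E]

theorem aux_sep (Γ : Submodule ℝ E) (hΓ : IsClosed (Γ : Set E)) {e : E} (he : e ∉ Γ) :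
    ∃ φ : StrongDual ℝ E, (∀ x ∈ Γ, φ x = 0) ∧ φ e ≠ 0 := by
  obtain ⟨φ, u, hs, hu⟩ := geometric_hahn_banach_closed_point Γ.convex hΓ he
  have h0 : (0:ℝ) < u := by simpa using hs 0 Γ.zero_mem
  refine ⟨φ, fun x hx => ?_, fun h => by rw [h] at hu; linarith⟩
  by_contra h
  have h2 := hs ((2*u/(φ x)) • x) (Γ.smul_mem _ hx)
  rw [map_smul, smul_eq_mul, div_mul_cancel₀ _ h] at h2
  linarith

theorem aux_refl_submodule (hE : Function.Surjective ⇑(inclusionInDoubleDual ℝ E))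
    (Γ : Submodule ℝ E) (hΓ : IsClosed (Γ : Set E)) :
    Function.Surjective ⇑(inclusionInDoubleDual ℝ ↥Γ) := by
  intro ξ
  let Ξlin : StrongDual ℝ E →ₗ[ℝ] ℝ :=
    { toFun := fun φ => ξ (φ.comp Γ.subtypeL)
      map_add' := fun φ ψ => by simp [ContinuousLinearMap.add_comp]
      map_smul' := fun c φ => by simp [ContinuousLinearMap.smul_comp] }
  have hbound : ∀ φ : StrongDual ℝ E, ‖Ξlin φ‖ ≤ ‖ξ‖ * ‖φ‖ := by
    intro φ
    calc ‖ξ (φ.comp Γ.subtypeL)‖ ≤ ‖ξ‖ * ‖φ.comp Γ.subtypeL‖ := ξ.le_opNorm _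
    _ ≤ ‖ξ‖ * ‖φ‖ := by
        gcongr
        refine ContinuousLinearMap.opNorm_le_bound _ (norm_nonneg φ) fun x => ?_
        simpa using φ.le_opNorm (x : E)
  let Ξ : StrongDual ℝ (StrongDual ℝ E) := Ξlin.mkContinuous ‖ξ‖ hbound
  obtain ⟨e, he⟩ := hE Ξ
  have heΓ : e ∈ Γ := by
    by_contra hne
    obtain ⟨φ, hφ0, hφe⟩ := aux_sep Γ hΓ hne
    have h1 : φ.comp Γ.subtypeL = 0 := by
      ext x; exact hφ0 x x.2
    have h2 : Ξ φ = 0 := by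
      show ξ (φ.comp Γ.subtypeL) = 0
      rw [h1, map_zero]
    rw [← he, dual_def] at h2
    exact hφe h2
  refine ⟨⟨e, heΓ⟩, ?_⟩
  ext ψ
  obtain ⟨Ψ, hext, -⟩ := exists_extension_norm_eq Γ ψ
  have hψ : ψ = Ψ.comp Γ.subtypeL := by
    ext x; exact (hext x).symm
  rw [dual_def, hψ]
  have h3 : ξ (Ψ.comp Γ.subtypeL) = Ξ Ψ := rfl
  rw [h3, ← he, dual_def]
  rfl

theorem aux_refl_prod {F : Type*} [NormedAddCommGroup F] [NormedSpace ℝ F]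
    (hE : Function.Surjective ⇑(inclusionInDoubleDual ℝ E))
    (hF : Function.Surjective ⇑(inclusionInDoubleDual ℝ F)) :
    Function.Surjective ⇑(inclusionInDoubleDual ℝ (E × F)) := by
  intro ξ
  let ξ1lin : StrongDual ℝ E →ₗ[ℝ] ℝ :=
    { toFun := fun φ => ξ (φ.comp (ContinuousLinearMap.fst ℝ E F))
      map_add' := fun φ ψ => by simp [ContinuousLinearMap.add_comp]
      map_smul' := fun c φ => by simp [ContinuousLinearMap.smul_comp] }
  have hb1 : ∀ φ : StrongDual ℝ E, ‖ξ1lin φ‖ ≤ ‖ξ‖ * ‖φ‖ := by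
    intro φ
    calc ‖ξ (φ.comp (ContinuousLinearMap.fst ℝ E F))‖
        ≤ ‖ξ‖ * ‖φ.comp (ContinuousLinearMap.fst ℝ E F)‖ := ξ.le_opNorm _
    _ ≤ ‖ξ‖ * ‖φ‖ := by
        gcongr
        refine ContinuousLinearMap.opNorm_le_bound _ (norm_nonneg φ) fun p => ?_
        calc ‖φ p.1‖ ≤ ‖φ‖ * ‖p.1‖ := φ.le_opNorm _
        _ ≤ ‖φ‖ * ‖p‖ := by gcongr; exact norm_fst_le p
  let ξ2lin : StrongDual ℝ F →ₗ[ℝ] ℝ :=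
    { toFun := fun φ => ξ (φ.comp (ContinuousLinearMap.snd ℝ E F))
      map_add' := fun φ ψ => by simp [ContinuousLinearMap.add_comp]
      map_smul' := fun c φ => by simp [ContinuousLinearMap.smul_comp] }
  have hb2 : ∀ φ : StrongDual ℝ F, ‖ξ2lin φ‖ ≤ ‖ξ‖ * ‖φ‖ := by
    intro φ
    calc ‖ξ (φ.comp (ContinuousLinearMap.snd ℝ E F))‖
        ≤ ‖ξ‖ * ‖φ.comp (ContinuousLinearMap.snd ℝ E F)‖ := ξ.le_opNorm _
    _ ≤ ‖ξ‖ * ‖φ‖ := by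
        gcongr
        refine ContinuousLinearMap.opNorm_le_bound _ (norm_nonneg φ) fun p => ?_
        calc ‖φ p.2‖ ≤ ‖φ‖ * ‖p.2‖ := φ.le_opNorm _
        _ ≤ ‖φ‖ * ‖p‖ := by gcongr; exact norm_snd_le p
  obtain ⟨x, hx⟩ := hE (ξ1lin.mkContinuous ‖ξ‖ hb1)
  obtain ⟨y, hy⟩ := hF (ξ2lin.mkContinuous ‖ξ‖ hb2)
  refine ⟨(x, y), ?_⟩
  ext ψ
  rw [dual_def]
  have hdecomp : ψ = (ψ.comp (ContinuousLinearMap.inl ℝ E F)).comp (ContinuousLinearMap.fst ℝ E F)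
      + (ψ.comp (ContinuousLinearMap.inr ℝ E F)).comp (ContinuousLinearMap.snd ℝ E F) := by
    refine ContinuousLinearMap.ext fun p => ?_
    show ψ p = ψ (p.1, 0) + ψ (0, p.2)
    rw [← map_add]
    simp
  conv_rhs => rw [hdecomp]
  rw [map_add]
  have e1 : ξ ((ψ.comp (ContinuousLinearMap.inl ℝ E F)).comp (ContinuousLinearMap.fst ℝ E F))
      = (ψ.comp (ContinuousLinearMap.inl ℝ E F)) x := by
    have : ξ1lin.mkContinuous ‖ξ‖ hb1 (ψ.comp (ContinuousLinearMap.inl ℝ E F))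
        = (ψ.comp (ContinuousLinearMap.inl ℝ E F)) x := by rw [← hx, dual_def]
    exact this
  have e2 : ξ ((ψ.comp (ContinuousLinearMap.inr ℝ E F)).comp (ContinuousLinearMap.snd ℝ E F))
      = (ψ.comp (ContinuousLinearMap.inr ℝ E F)) y := by
    have : ξ2lin.mkContinuous ‖ξ‖ hb2 (ψ.comp (ContinuousLinearMap.inr ℝ E F))
        = (ψ.comp (ContinuousLinearMap.inr ℝ E F)) y := by rw [← hy, dual_def]
    exact this
  rw [e1, e2]
  show ψ (x, y) = ψ (x, 0) + ψ (0, y)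
  rw [← map_add]
  simp


theorem aux_laxmilgram {W : Type*} [NormedAddCommGroup W] [NormedSpace ℝ W] [CompleteSpace W]
    (hrefl : Function.Surjective ⇑(inclusionInDoubleDual ℝ W))
    (T : W →ₗ[ℝ] StrongDual ℝ W) (M : ℝ) (hM : ∀ u, ‖T u‖ ≤ M * ‖u‖)
    (c : ℝ) (hc : 0 < c) (hcoer : ∀ u, c * ‖u‖ ^ 2 ≤ T u u) (ℓ : StrongDual ℝ W) :
    ∃ u, T u = ℓ := by
  have hM0 : ∀ u, ‖T u‖ ≤ max M 0 * ‖u‖ := fun u => by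
    have := hM u
    nlinarith [norm_nonneg u, le_max_left M 0]
  have hlow : ∀ u : W, c * ‖u‖ ≤ ‖T u‖ := by
    intro u
    by_cases hu : u = 0
    · simp [hu]
    have hn : 0 < ‖u‖ := norm_pos_iff.mpr hu
    have h1 : c * ‖u‖ ^ 2 ≤ ‖T u‖ * ‖u‖ := by
      refine le_trans (hcoer u) (le_trans (le_abs_self _) ?_)
      exact (T u).le_opNorm u
    have := (mul_le_mul_iff_left₀ hn).mp (by nlinarith : c * ‖u‖ * ‖u‖ ≤ ‖T u‖ * ‖u‖)
    exact this
  -- Lipschitz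
  have hlip : LipschitzWith (Real.toNNReal (max M 0)) ⇑T := by
    refine LipschitzWith.of_dist_le_mul fun x y => ?_
    rw [dist_eq_norm, dist_eq_norm, ← map_sub]
    calc ‖T (x - y)‖ ≤ max M 0 * ‖x - y‖ := hM0 _
    _ = (Real.toNNReal (max M 0) : ℝ) * ‖x - y‖ := by
        rw [Real.coe_toNNReal _ (le_max_right M 0)]
  have hanti : AntilipschitzWith (Real.toNNReal c⁻¹) ⇑T := by
    refine AntilipschitzWith.of_le_mul_dist fun x y => ?_
    rw [dist_eq_norm, dist_eq_norm, ← map_sub, Real.coe_toNNReal _ (le_of_lt (inv_pos.mpr hc))]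
    calc ‖x - y‖ = c⁻¹ * (c * ‖x - y‖) := by field_simp
    _ ≤ c⁻¹ * ‖T (x - y)‖ := by
        have h0 : (0:ℝ) ≤ c⁻¹ := le_of_lt (inv_pos.mpr hc)
        exact mul_le_mul_of_nonneg_left (hlow _) h0
  have hclosed : IsClosed (Set.range ⇑T) := hanti.isClosed_range hlip.uniformContinuous
  -- density
  have htop : (LinearMap.range T).topologicalClosure = ⊤ := by
    by_contra hS
    obtain ⟨ψ, hψ⟩ : ∃ ψ : StrongDual ℝ W, ψ ∉ (LinearMap.range T).topologicalClosure := by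
      by_contra h
      push_neg at h
      exact hS (Submodule.eq_top_iff'.mpr h)
    obtain ⟨ξ, hξ0, hξψ⟩ := aux_sep _ (LinearMap.range T).isClosed_topologicalClosure hψ
    obtain ⟨w, hw⟩ := hrefl ξ
    have hTw : ∀ u : W, T u w = 0 := by
      intro u
      have h1 : ξ (T u) = 0 :=
        hξ0 _ ((LinearMap.range T).le_topologicalClosure (LinearMap.mem_range_self T u))
      rw [← hw, dual_def] at h1
      exact h1
    have hw0 : w = 0 := by
      have := hcoer w
      rw [hTw w] at this
      have hn : ‖w‖ = 0 := by
        by_contra h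
        have hp : 0 < ‖w‖ := lt_of_le_of_ne (norm_nonneg w) (Ne.symm h)
        nlinarith [mul_pos hc (mul_pos hp hp)]
      exact norm_eq_zero.mp hn
    rw [hw0, map_zero] at hw
    exact hξψ (by rw [← hw]; rfl)
  have hmem : ℓ ∈ closure (Set.range ⇑T) := by
    have h1 : ℓ ∈ (LinearMap.range T).topologicalClosure := htop ▸ Submodule.mem_top
    rw [← LinearMap.coe_range, ← Submodule.topologicalClosure_coe]; exact h1
  rw [hclosed.closure_eq] at hmem
  exact hmem

end AuxLM

set_option maxHeartbeats 2000000 in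
theorem linear_problem_existence_uniqueness
    [CompleteSpace L] [CompleteSpace Lv]
    [TopologicalSpace.SeparableSpace L] [TopologicalSpace.SeparableSpace Lv]
    (hreflL : Function.Surjective ⇑(inclusionInDoubleDual ℝ L))
    (hreflLv : Function.Surjective ⇑(inclusionInDoubleDual ℝ Lv))
    (WG : Submodule ℝ L) (hWGdense : Dense (WG : Set L))
    (G : ↥WG →ₗ[ℝ] Lv)
    (hGclosed : IsClosed (Set.range fun u : ↥WG => ((u : L), G u)))
    (V : Submodule ℝ (StrongDual ℝ L)) (hVclosed : IsClosed (V : Set (StrongDual ℝ L)))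
    (CWGV : ℝ) (hCWGV : 0 < CWGV)
    (hequiv : ∀ u : ↥WG, (‖(u : L)‖ ^ (2:ℝ) + ‖G u‖ ^ (2:ℝ)) ^ (1/2 : ℝ) ≤
      CWGV * (semV V (u : L) ^ (2:ℝ) + ‖G u‖ ^ (2:ℝ)) ^ (1/2 : ℝ))
    (aV : Lv →L[ℝ] StrongDual ℝ Lv) (aS : L →L[ℝ] StrongDual ℝ L)
    (abar : ℝ) (haVnorm : ‖aV‖ ≤ abar) (haSnorm : ‖aS‖ ≤ abar)
    (alph : ℝ) (halph : 0 < alph)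
    (haVcoer : ∀ gv : Lv, alph * ‖gv‖ ^ (2:ℝ) ≤ aV gv gv)
    (haScoer : ∀ v : L, alph * semV V v ^ (2:ℝ) ≤ aS v v)
    (f : StrongDual ℝ L) (F : StrongDual ℝ Lv) :
    ∃! ubar : ↥WG, ∀ v : ↥WG,
      aV (G ubar) (G v) + aS (ubar : L) (v : L) = f (v : L) - F (G v) := by

  classical
  have hconv : ∀ x : ℝ, x ^ (2:ℝ) = x ^ 2 := fun x => by
    rw [show (2:ℝ) = ((2:ℕ):ℝ) by norm_num, Real.rpow_natCast]
  have habar0 : (0:ℝ) ≤ abar := le_trans (norm_nonneg aV) haVnorm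
  set g : ↥WG →ₗ[ℝ] L × Lv := (WG.subtype).prod G with hgdef
  set Γ : Submodule ℝ (L × Lv) := LinearMap.range g with hΓdef
  have hΓc : IsClosed (Γ : Set (L × Lv)) := by
    have h1 : (Γ : Set (L × Lv)) = Set.range fun u : ↥WG => ((u : L), G u) := by
      rw [hΓdef, LinearMap.coe_range]; rfl
    rw [h1]; exact hGclosed
  haveI : CompleteSpace ↥Γ := hΓc.completeSpace_coe
  have hrefl : Function.Surjective ⇑(inclusionInDoubleDual ℝ ↥Γ) :=
    aux_refl_submodule (aux_refl_prod hreflL hreflLv) Γ hΓc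
  set T : ↥Γ →ₗ[ℝ] StrongDual ℝ ↥Γ :=
    { toFun := fun w =>
        ((aV (w : L × Lv).2).comp (ContinuousLinearMap.snd ℝ L Lv) +
         (aS (w : L × Lv).1).comp (ContinuousLinearMap.fst ℝ L Lv)).comp Γ.subtypeL
      map_add' := fun x y => by
        ext v
        simp only [ContinuousLinearMap.comp_apply, ContinuousLinearMap.add_apply,
          Submodule.coe_add, Prod.fst_add, Prod.snd_add, map_add]
        ring
      map_smul' := fun c x => by
        ext v
        simp only [ContinuousLinearMap.comp_apply, ContinuousLinearMap.add_apply,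
          Submodule.coe_smul, Prod.smul_fst, Prod.smul_snd, map_smul, RingHom.id_apply,
          ContinuousLinearMap.smul_apply, smul_eq_mul]
        ring } with hTdef
  have Tapp : ∀ w v : ↥Γ, T w v
      = aV (w : L × Lv).2 (v : L × Lv).2 + aS (w : L × Lv).1 (v : L × Lv).1 := fun w v => rfl
  have hM : ∀ w : ↥Γ, ‖T w‖ ≤ 2 * abar * ‖w‖ := by
    intro w
    have hnw : ‖(w : L × Lv)‖ = ‖w‖ := rfl
    refine ContinuousLinearMap.opNorm_le_bound _ (by positivity) fun v => ?_
    rw [Tapp]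
    have hnv : ‖(v : L × Lv)‖ = ‖v‖ := rfl
    have h2 : ‖aV (w : L × Lv).2‖ ≤ abar * ‖w‖ :=
      le_trans (aV.le_opNorm _)
        (mul_le_mul haVnorm (hnw ▸ norm_snd_le (w : L × Lv)) (norm_nonneg _) habar0)
    have h3 : ‖aS (w : L × Lv).1‖ ≤ abar * ‖w‖ :=
      le_trans (aS.le_opNorm _)
        (mul_le_mul haSnorm (hnw ▸ norm_fst_le (w : L × Lv)) (norm_nonneg _) habar0)
    have hw0 : (0:ℝ) ≤ abar * ‖w‖ := by positivity
    calc ‖aV (w : L × Lv).2 (v : L × Lv).2 + aS (w : L × Lv).1 (v : L × Lv).1‖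
        ≤ ‖aV (w : L × Lv).2 (v : L × Lv).2‖ + ‖aS (w : L × Lv).1 (v : L × Lv).1‖ :=
          norm_add_le _ _
    _ ≤ (abar * ‖w‖) * ‖v‖ + (abar * ‖w‖) * ‖v‖ := by
        refine add_le_add ?_ ?_
        · exact le_trans ((aV (w : L × Lv).2).le_opNorm _)
            (mul_le_mul h2 (hnv ▸ norm_snd_le (v : L × Lv)) (norm_nonneg _) hw0)
        · exact le_trans ((aS (w : L × Lv).1).le_opNorm _)
            (mul_le_mul h3 (hnv ▸ norm_fst_le (v : L × Lv)) (norm_nonneg _) hw0)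
    _ = 2 * abar * ‖w‖ * ‖v‖ := by ring
  have key : ∀ u : ↥WG, ‖(u:L)‖^2 + ‖G u‖^2 ≤ CWGV^2 * (semV V (u:L)^2 + ‖G u‖^2) := by
    intro u
    have h := hequiv u
    simp only [hconv] at h
    rw [← Real.sqrt_eq_rpow, ← Real.sqrt_eq_rpow] at h
    have hA : (0:ℝ) ≤ ‖(u:L)‖^2 + ‖G u‖^2 := by positivity
    have hB : (0:ℝ) ≤ semV V (u:L)^2 + ‖G u‖^2 := by positivity
    nlinarith [Real.sq_sqrt hA, Real.sq_sqrt hB,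
      mul_self_le_mul_self (Real.sqrt_nonneg (‖(u:L)‖^2 + ‖G u‖^2)) h,
      Real.sqrt_nonneg (semV V (u:L)^2 + ‖G u‖^2), hCWGV.le]
  have hCp : (0:ℝ) < CWGV^2 := by positivity
  have hcpos : 0 < alph / CWGV^2 := by positivity
  have hcoer : ∀ w : ↥Γ, alph / CWGV^2 * ‖w‖^2 ≤ T w w := by
    intro w
    obtain ⟨u, hu⟩ := w.2
    have h1 : (w : L × Lv).1 = (u : L) := by rw [← hu]; rfl
    have h2 : (w : L × Lv).2 = G u := by rw [← hu]; rfl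
    rw [Tapp, h1, h2]
    have hV := haVcoer (G u)
    have hS := haScoer (u : L)
    simp only [hconv] at hV hS
    have hk := key u
    have hwn : ‖w‖ = max ‖(u:L)‖ ‖G u‖ := by
      have h3 : ‖w‖ = ‖(w : L × Lv)‖ := rfl
      rw [h3, Prod.norm_def, h1, h2]
    have hsq : ‖w‖^2 ≤ ‖(u:L)‖^2 + ‖G u‖^2 := by
      rcases max_cases ‖(u:L)‖ ‖G u‖ with ⟨hmax, -⟩ | ⟨hmax, -⟩ <;>
        rw [hwn, hmax] <;> nlinarith [sq_nonneg ‖(u:L)‖, sq_nonneg ‖G u‖]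
    calc alph / CWGV^2 * ‖w‖^2 ≤ alph / CWGV^2 * (‖(u:L)‖^2 + ‖G u‖^2) := by
          exact mul_le_mul_of_nonneg_left hsq hcpos.le
    _ ≤ alph / CWGV^2 * (CWGV^2 * (semV V (u:L)^2 + ‖G u‖^2)) :=
          mul_le_mul_of_nonneg_left hk hcpos.le
    _ = alph * (semV V (u:L)^2 + ‖G u‖^2) := by
          field_simp
    _ ≤ aV (G u) (G u) + aS (u:L) (u:L) := by rw [mul_add]; linarith
  set ℓ : StrongDual ℝ ↥Γ := (f.comp (ContinuousLinearMap.fst ℝ L Lv) -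
      F.comp (ContinuousLinearMap.snd ℝ L Lv)).comp Γ.subtypeL with hℓdef
  obtain ⟨w, hw⟩ := aux_laxmilgram hrefl T (2*abar) hM _ hcpos hcoer ℓ
  obtain ⟨ubar, hub⟩ := w.2
  have h1 : (w : L × Lv).1 = (ubar : L) := by rw [← hub]; rfl
  have h2 : (w : L × Lv).2 = G ubar := by rw [← hub]; rfl
  have hmain : ∀ v : ↥WG,
      aV (G ubar) (G v) + aS (ubar : L) (v : L) = f (v : L) - F (G v) := by
    intro v
    have hv : g v ∈ Γ := LinearMap.mem_range_self g v
    have heq := ContinuousLinearMap.ext_iff.mp hw (⟨g v, hv⟩ : ↥Γ)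
    rw [Tapp, h1, h2] at heq
    exact heq
  refine ⟨ubar, hmain, fun y hy => ?_⟩
  set d : ↥WG := y - ubar with hddef
  have hkey2 : aV (G y - G ubar) (G y - G ubar)
      + aS ((y:L) - (ubar:L)) ((y:L) - (ubar:L)) = 0 := by
    have h3y := hy y
    have h3u := hy ubar
    have h4y := hmain y
    have h4u := hmain ubar
    simp only [map_sub, ContinuousLinearMap.sub_apply]
    linarith
  have h5 : G d = G y - G ubar := map_sub G y ubar
  have h6 : ((d : L)) = (y : L) - (ubar : L) := rfl
  have hd : aV (G d) (G d) + aS (d : L) (d : L) = 0 := by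
    rw [h5, h6]; exact hkey2
  have hV := haVcoer (G d)
  have hS := haScoer (d : L)
  simp only [hconv] at hV hS
  have hsum0 : semV V (d:L)^2 + ‖G d‖^2 = 0 := by
    refine le_antisymm ?_ (by positivity)
    nlinarith
  have he := hequiv d
  simp only [hconv] at he
  rw [hsum0, ← Real.sqrt_eq_rpow, ← Real.sqrt_eq_rpow, Real.sqrt_zero, mul_zero] at he
  have hA : (0:ℝ) ≤ ‖(d:L)‖^2 + ‖G d‖^2 := by positivity
  have hz : ‖(d:L)‖^2 + ‖G d‖^2 = 0 := by
    have h7 := Real.sqrt_nonneg (‖(d:L)‖^2 + ‖G d‖^2)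
    have h8 : Real.sqrt (‖(d:L)‖^2 + ‖G d‖^2) = 0 := le_antisymm he h7
    rw [← Real.sq_sqrt hA, h8]
    norm_num
  have hd2 : ‖(d:L)‖^2 = 0 := by
    have h9 := sq_nonneg ‖G d‖
    have h10 := sq_nonneg ‖(d:L)‖
    linarith
  have hd0 : (d : L) = 0 := norm_eq_zero.mp (sq_eq_zero_iff.mp hd2)
  have : d = 0 := by
    exact Subtype.ext hd0
  rw [hddef] at this
  exact sub_eq_zero.mp this
end
end

section
/- Under the linear coercivity assumptions, let 𝒟 be a gradient discretisation. Then there exists one and only one u_𝒟 ∈ X_𝒟 solving the linear gradient scheme, and it satisfies the error estimates ‖Gū − G_𝒟 u_𝒟‖_𝐋 ≤ (1/α)[W_𝒟(𝐚(Gū)+𝐅) + (ᾱ(1+C_𝒟) + α) S_𝒟(ū)] and ‖ū − P_𝒟 u_𝒟‖_L ≤ (1/α)[C_𝒟 W_𝒟(𝐚(Gū)+𝐅) + (C_𝒟(1+C_𝒟)ᾱ + α) S_𝒟(ū)], where ū is the unique solution of the weak linear problem. -/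
open NormedSpace Filter Topology

noncomputable section

variable {L Lv : Type*} [NormedAddCommGroup L] [NormedSpace ℝ L]
  [NormedAddCommGroup Lv] [NormedSpace ℝ Lv]

section semVlemmas

variable {V : Submodule ℝ (StrongDual ℝ L)}

lemma semV_mem_nonneg {x : ℝ}
    (hx : x ∈ (fun μ : StrongDual ℝ L => |μ u'| / ‖μ‖) '' {μ : StrongDual ℝ L | μ ∈ V ∧ μ ≠ 0}) :
    0 ≤ x := by
  obtain ⟨μ, _, rfl⟩ := hx
  positivity

lemma semV_nonneg (u : L) : 0 ≤ semV V u :=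
  Real.sSup_nonneg fun _ hx => semV_mem_nonneg hx

lemma semV_mem_le {u : L} {x : ℝ}
    (hx : x ∈ (fun μ : StrongDual ℝ L => |μ u| / ‖μ‖) '' {μ : StrongDual ℝ L | μ ∈ V ∧ μ ≠ 0}) :
    x ≤ ‖u‖ := by
  obtain ⟨μ, ⟨_, hμ0⟩, rfl⟩ := hx
  have hμ : (0:ℝ) < ‖μ‖ := norm_pos_iff.mpr hμ0
  rw [div_le_iff₀ hμ]
  calc |μ u| = ‖μ u‖ := (Real.norm_eq_abs _).symm
    _ ≤ ‖μ‖ * ‖u‖ := μ.le_opNorm u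
    _ = ‖u‖ * ‖μ‖ := by ring

lemma semV_bddAbove (u : L) :
    BddAbove ((fun μ : StrongDual ℝ L => |μ u| / ‖μ‖) '' {μ : StrongDual ℝ L | μ ∈ V ∧ μ ≠ 0}) :=
  ⟨‖u‖, fun _ hx => semV_mem_le hx⟩

lemma semV_le_norm (u : L) : semV V u ≤ ‖u‖ :=
  Real.sSup_le (fun _ hx => semV_mem_le hx) (norm_nonneg u)

lemma abs_div_le_semV {μ : StrongDual ℝ L} (hμ : μ ∈ V) (hμ0 : μ ≠ 0) (u : L) :
    |μ u| / ‖μ‖ ≤ semV V u :=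
  le_csSup (semV_bddAbove u) ⟨μ, ⟨hμ, hμ0⟩, rfl⟩

lemma semV_add (u v : L) : semV V (u + v) ≤ semV V u + semV V v := by
  refine Real.sSup_le ?_ (add_nonneg (semV_nonneg u) (semV_nonneg v))
  rintro x ⟨μ, ⟨hμ, hμ0⟩, rfl⟩
  have hμn : (0:ℝ) < ‖μ‖ := norm_pos_iff.mpr hμ0
  calc |μ (u + v)| / ‖μ‖ ≤ (|μ u| + |μ v|) / ‖μ‖ := by
        gcongr
        rw [map_add]; exact abs_add_le _ _
    _ = |μ u| / ‖μ‖ + |μ v| / ‖μ‖ := add_div _ _ _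
    _ ≤ semV V u + semV V v :=
        add_le_add (abs_div_le_semV hμ hμ0 u) (abs_div_le_semV hμ hμ0 v)

lemma semV_smul_le (c : ℝ) (u : L) : semV V (c • u) ≤ |c| * semV V u := by
  refine Real.sSup_le ?_ (mul_nonneg (abs_nonneg c) (semV_nonneg u))
  rintro x ⟨μ, ⟨hμ, hμ0⟩, rfl⟩
  dsimp only
  have : |μ (c • u)| / ‖μ‖ = |c| * (|μ u| / ‖μ‖) := by
    rw [map_smul, smul_eq_mul, abs_mul, mul_div_assoc]
  rw [this]
  exact mul_le_mul_of_nonneg_left (abs_div_le_semV hμ hμ0 u) (abs_nonneg c)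

lemma semV_neg (u : L) : semV V (-u) = semV V u := by
  unfold semV
  congr 1
  ext x
  constructor <;> rintro ⟨μ, hμ, rfl⟩ <;> exact ⟨μ, hμ, by simp⟩

lemma semV_zero : semV V (0 : L) = 0 :=
  le_antisymm (by simpa using semV_le_norm (V := V) (0:L)) (semV_nonneg 0)

end semVlemmas

namespace GradDisc

variable {V : Submodule ℝ (StrongDual ℝ L)}

lemma dnorm_eq (D : GradDisc L Lv V 2) (v : D.X) :
    D.dnorm v = Real.sqrt (semV V (D.P v) ^ 2 + ‖D.Gd v‖ ^ 2) := by
  rw [dnorm, Real.sqrt_eq_rpow, Real.rpow_two, Real.rpow_two]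

lemma dnorm_nonneg (D : GradDisc L Lv V 2) (v : D.X) : 0 ≤ D.dnorm v := by
  rw [dnorm_eq]; exact Real.sqrt_nonneg _

lemma sq_dnorm (D : GradDisc L Lv V 2) (v : D.X) :
    D.dnorm v ^ 2 = semV V (D.P v) ^ 2 + ‖D.Gd v‖ ^ 2 := by
  rw [dnorm_eq]
  exact Real.sq_sqrt (by positivity)

lemma norm_Gd_le_dnorm (D : GradDisc L Lv V 2) (v : D.X) : ‖D.Gd v‖ ≤ D.dnorm v := by
  rw [dnorm_eq]
  calc ‖D.Gd v‖ = Real.sqrt (‖D.Gd v‖ ^ 2) := (Real.sqrt_sq (norm_nonneg _)).symm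
    _ ≤ _ := Real.sqrt_le_sqrt (by nlinarith [sq_nonneg (semV V (D.P v))])

lemma dnorm_eq_zero (D : GradDisc L Lv V 2) {v : D.X} (h : D.dnorm v = 0) : v = 0 :=
  D.dnorm_definite v h

lemma dnorm_zero (D : GradDisc L Lv V 2) : D.dnorm 0 = 0 := by
  rw [dnorm_eq]
  simp [semV_zero]

lemma sqrt_tri (a b c d : ℝ) :
    Real.sqrt ((a + c) ^ 2 + (b + d) ^ 2) ≤
      Real.sqrt (a ^ 2 + b ^ 2) + Real.sqrt (c ^ 2 + d ^ 2) := by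
  have key : ∀ x y : ℝ, Real.sqrt (x ^ 2 + y ^ 2) = ‖(⟨x, y⟩ : ℂ)‖ := fun x y => by
    rw [Complex.norm_def, Complex.normSq_mk]; ring_nf
  rw [key, key, key]
  have : (⟨a + c, b + d⟩ : ℂ) = (⟨a, b⟩ : ℂ) + (⟨c, d⟩ : ℂ) := by
    apply Complex.ext <;> simp
  rw [this]
  exact norm_add_le _ _

lemma sqrt_mono2 {a b c d : ℝ} (ha : 0 ≤ a) (hb : 0 ≤ b) (hac : a ≤ c) (hbd : b ≤ d) :
    Real.sqrt (a ^ 2 + b ^ 2) ≤ Real.sqrt (c ^ 2 + d ^ 2) := by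
  apply Real.sqrt_le_sqrt
  nlinarith

lemma dnorm_add_le (D : GradDisc L Lv V 2) (u v : D.X) :
    D.dnorm (u + v) ≤ D.dnorm u + D.dnorm v := by
  rw [dnorm_eq, dnorm_eq, dnorm_eq]
  calc Real.sqrt (semV V (D.P (u + v)) ^ 2 + ‖D.Gd (u + v)‖ ^ 2)
      ≤ Real.sqrt ((semV V (D.P u) + semV V (D.P v)) ^ 2 + (‖D.Gd u‖ + ‖D.Gd v‖) ^ 2) := by
        apply sqrt_mono2 (semV_nonneg _) (norm_nonneg _)
        · rw [map_add]; exact semV_add _ _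
        · rw [map_add]; exact norm_add_le _ _
    _ ≤ _ := sqrt_tri _ _ _ _

lemma dnorm_neg (D : GradDisc L Lv V 2) (v : D.X) : D.dnorm (-v) = D.dnorm v := by
  rw [dnorm_eq, dnorm_eq, map_neg, map_neg, semV_neg, norm_neg]

lemma dnorm_smul_le (D : GradDisc L Lv V 2) (c : ℝ) (v : D.X) :
    D.dnorm (c • v) ≤ |c| * D.dnorm v := by
  rw [dnorm_eq, dnorm_eq]
  calc Real.sqrt (semV V (D.P (c • v)) ^ 2 + ‖D.Gd (c • v)‖ ^ 2)
      ≤ Real.sqrt ((|c| * semV V (D.P v)) ^ 2 + (|c| * ‖D.Gd v‖) ^ 2) := by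
        apply sqrt_mono2 (semV_nonneg _) (norm_nonneg _)
        · rw [map_smul]; exact semV_smul_le _ _
        · rw [map_smul, norm_smul, Real.norm_eq_abs]
    _ = Real.sqrt (c ^ 2 * (semV V (D.P v) ^ 2 + ‖D.Gd v‖ ^ 2)) := by rw [← sq_abs c]; ring_nf
    _ = |c| * Real.sqrt (semV V (D.P v) ^ 2 + ‖D.Gd v‖ ^ 2) := by
        rw [Real.sqrt_mul (sq_nonneg c), Real.sqrt_sq_eq_abs]

/-- The discrete norm as an `AddGroupNorm`. -/
noncomputable def dAGN (D : GradDisc L Lv V 2) : AddGroupNorm D.X where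
  toFun := D.dnorm
  map_zero' := D.dnorm_zero
  add_le' := D.dnorm_add_le
  neg' := D.dnorm_neg
  eq_zero_of_map_eq_zero' := fun _ h => D.dnorm_eq_zero h

lemma exists_bound (D : GradDisc L Lv V 2) {W : Type*} [NormedAddCommGroup W]
    [NormedSpace ℝ W] (T : D.X →ₗ[ℝ] W) :
    ∃ C : ℝ, ∀ v : D.X, ‖T v‖ ≤ C * D.dnorm v := by
  letI : NormedAddCommGroup D.X := D.dAGN.toNormedAddCommGroup
  letI : NormedSpace ℝ D.X := ⟨fun c x => D.dnorm_smul_le c x⟩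
  let T' := LinearMap.toContinuousLinearMap T
  exact ⟨‖T'‖, fun v => T'.le_opNorm v⟩

end GradDisc

namespace GradDisc

variable {V : Submodule ℝ (StrongDual ℝ L)}

lemma div_sup_bound (D : GradDisc L Lv V 2) (g : D.X → ℝ) (hg0 : ∀ v, 0 ≤ g v)
    (C : ℝ) (hC : ∀ v, g v ≤ C * D.dnorm v) (v : D.X) :
    g v ≤ sSup ((fun v => g v / D.dnorm v) '' {v : D.X | v ≠ 0}) * D.dnorm v := by
  have hsup0 : 0 ≤ sSup ((fun v => g v / D.dnorm v) '' {v : D.X | v ≠ 0}) := by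
    apply Real.sSup_nonneg
    rintro x ⟨y, _, rfl⟩
    exact div_nonneg (hg0 y) (D.dnorm_nonneg y)
  rcases eq_or_ne v 0 with rfl | hv
  · have h1 : g 0 ≤ 0 := by simpa [D.dnorm_zero] using hC 0
    have := hg0 0
    rw [D.dnorm_zero, mul_zero]
    linarith
  · have hd : 0 < D.dnorm v := by
      rcases (D.dnorm_nonneg v).lt_or_eq with h | h
      · exact h
      · exact absurd (D.dnorm_eq_zero h.symm) hv
    have hbdd : BddAbove ((fun v => g v / D.dnorm v) '' {v : D.X | v ≠ 0}) := by
      refine ⟨C, ?_⟩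
      rintro x ⟨y, hy, rfl⟩
      have hdy : 0 < D.dnorm y := by
        rcases (D.dnorm_nonneg y).lt_or_eq with h | h
        · exact h
        · exact absurd (D.dnorm_eq_zero h.symm) hy
      exact (div_le_iff₀ hdy).mpr (hC y)
    have hmem : g v / D.dnorm v ≤ sSup ((fun v => g v / D.dnorm v) '' {v : D.X | v ≠ 0}) :=
      le_csSup hbdd ⟨v, hv, rfl⟩
    exact (div_le_iff₀ hd).mp hmem

lemma CD_nonneg (D : GradDisc L Lv V 2) : 0 ≤ D.CD := by
  apply Real.sSup_nonneg
  rintro x ⟨y, _, rfl⟩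
  exact div_nonneg (norm_nonneg _) (D.dnorm_nonneg y)

lemma norm_P_le (D : GradDisc L Lv V 2) (v : D.X) : ‖D.P v‖ ≤ D.CD * D.dnorm v := by
  obtain ⟨C, hC⟩ := D.exists_bound D.P
  exact D.div_sup_bound (fun v => ‖D.P v‖) (fun v => norm_nonneg _) C hC v

lemma WD_nonneg (D : GradDisc L Lv V 2) (φ : StrongDual ℝ Lv) (w : StrongDual ℝ L) :
    0 ≤ D.WDdef φ w := by
  apply Real.sSup_nonneg
  rintro x ⟨y, _, rfl⟩
  exact div_nonneg (abs_nonneg _) (D.dnorm_nonneg y)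

lemma abs_le_WD (D : GradDisc L Lv V 2) (φ : StrongDual ℝ Lv) (w : StrongDual ℝ L) (v : D.X) :
    |φ (D.Gd v) + w (D.P v)| ≤ D.WDdef φ w * D.dnorm v := by
  let T : D.X →ₗ[ℝ] ℝ :=
    ((φ : Lv →ₗ[ℝ] ℝ).comp D.Gd) + ((w : L →ₗ[ℝ] ℝ).comp D.P)
  obtain ⟨C, hC⟩ := D.exists_bound T
  have hTv : ∀ v, T v = φ (D.Gd v) + w (D.P v) := fun v => rfl
  have hC' : ∀ v, |φ (D.Gd v) + w (D.P v)| ≤ C * D.dnorm v := fun v => by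
    have := hC v
    rwa [hTv, Real.norm_eq_abs] at this
  exact D.div_sup_bound (fun v => |φ (D.Gd v) + w (D.P v)|) (fun v => abs_nonneg _) C hC' v

end GradDisc

lemma le_affine_sInf {ι : Type*} [Nonempty ι] {g : ι → ℝ} {x A M alph : ℝ}
    (halph : 0 < alph) (hM : 0 < M) (h : ∀ i, x ≤ (1 / alph) * (A + M * g i)) :
    x ≤ (1 / alph) * (A + M * sInf (Set.range g)) := by
  have h1 : (alph * x - A) / M ≤ sInf (Set.range g) := by
    apply le_csInf (Set.range_nonempty g)
    rintro b ⟨i, rfl⟩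
    rw [div_le_iff₀ hM]
    have hi := h i
    rw [one_div, inv_mul_eq_div, le_div_iff₀ halph] at hi
    linarith
  rw [div_le_iff₀ hM] at h1
  rw [one_div, inv_mul_eq_div, le_div_iff₀ halph]
  linarith

set_option maxHeartbeats 2000000 in
theorem linear_gradient_scheme_error_estimates
    [CompleteSpace L] [CompleteSpace Lv]
    [TopologicalSpace.SeparableSpace L] [TopologicalSpace.SeparableSpace Lv]
    (hreflL : Function.Surjective ⇑(inclusionInDoubleDual ℝ L))
    (hreflLv : Function.Surjective ⇑(inclusionInDoubleDual ℝ Lv))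
    (WG : Submodule ℝ L) (hWGdense : Dense (WG : Set L))
    (G : ↥WG →ₗ[ℝ] Lv)
    (hGclosed : IsClosed (Set.range fun u : ↥WG => ((u : L), G u)))
    (V : Submodule ℝ (StrongDual ℝ L)) (hVclosed : IsClosed (V : Set (StrongDual ℝ L)))
    (CWGV : ℝ) (hCWGV : 0 < CWGV)
    (hequiv : ∀ u : ↥WG, (‖(u : L)‖ ^ (2:ℝ) + ‖G u‖ ^ (2:ℝ)) ^ (1/2 : ℝ) ≤
      CWGV * (semV V (u : L) ^ (2:ℝ) + ‖G u‖ ^ (2:ℝ)) ^ (1/2 : ℝ))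
    (aV : Lv →L[ℝ] StrongDual ℝ Lv) (aS : L →L[ℝ] StrongDual ℝ L)
    (abar : ℝ) (haVnorm : ‖aV‖ ≤ abar) (haSnorm : ‖aS‖ ≤ abar)
    (alph : ℝ) (halph : 0 < alph)
    (haVcoer : ∀ gv : Lv, alph * ‖gv‖ ^ (2:ℝ) ≤ aV gv gv)
    (haScoer : ∀ v : L, alph * semV V v ^ (2:ℝ) ≤ aS v v)
    (f : StrongDual ℝ L) (F : StrongDual ℝ Lv)
    (D : GradDisc L Lv V 2)
    (ubar : ↥WG)
    (hubar : ∀ v : ↥WG,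
      aV (G ubar) (G v) + aS (ubar : L) (v : L) = f (v : L) - F (G v)) :
    (∃! u : D.X, ∀ v : D.X,
        aV (D.Gd u) (D.Gd v) + aS (D.P u) (D.P v) = f (D.P v) - F (D.Gd v)) ∧
    (∀ u : D.X,
      (∀ v : D.X,
        aV (D.Gd u) (D.Gd v) + aS (D.P u) (D.P v) = f (D.P v) - F (D.Gd v)) →
      ∀ w : StrongDual ℝ L, IsWDpair WG G (aV (G ubar) + F) w →
        ‖G ubar - D.Gd u‖ ≤ (1 / alph) *
          (D.WDdef (aV (G ubar) + F) w +
            (abar * (1 + D.CD) + alph) * D.SDdef (ubar : L) (G ubar)) ∧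
        ‖(ubar : L) - D.P u‖ ≤ (1 / alph) *
          (D.CD * D.WDdef (aV (G ubar) + F) w +
            (D.CD * (1 + D.CD) * abar + alph) * D.SDdef (ubar : L) (G ubar))) := by
  classical
  have habar0 : (0:ℝ) ≤ abar := le_trans (norm_nonneg aV) haVnorm
  have hCD0 := D.CD_nonneg
  have hcoerX : ∀ m : D.X,
      alph * D.dnorm m ^ 2 ≤ aV (D.Gd m) (D.Gd m) + aS (D.P m) (D.P m) := by
    intro m
    have h1 := haVcoer (D.Gd m)
    have h2 := haScoer (D.P m)
    rw [Real.rpow_two] at h1 h2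
    have h3 := D.sq_dnorm m
    have h4 : alph * (semV V (D.P m) ^ 2 + ‖D.Gd m‖ ^ 2) =
        alph * semV V (D.P m) ^ 2 + alph * ‖D.Gd m‖ ^ 2 := mul_add _ _ _
    rw [h3, h4]
    linarith
  have hker : ∀ m : D.X,
      (∀ v, aV (D.Gd m) (D.Gd v) + aS (D.P m) (D.P v) = 0) → m = 0 := by
    intro m hm
    have h := hcoerX m
    rw [hm m] at h
    have hs := D.dnorm_nonneg m
    have : D.dnorm m = 0 := by
      rcases hs.lt_or_eq with hpos | hzero
      · exfalso
        nlinarith [mul_pos halph (pow_pos hpos 2)]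
      · exact hzero.symm
    exact D.dnorm_eq_zero this
  -- the bilinear form as a linear map into the dual
  set B : D.X →ₗ[ℝ] D.X →ₗ[ℝ] ℝ := LinearMap.mk₂ ℝ
    (fun m n => aV (D.Gd m) (D.Gd n) + aS (D.P m) (D.P n))
    (fun m m' n => by simp only [map_add, ContinuousLinearMap.add_apply]; ring)
    (fun c m n => by
      simp only [map_smul, ContinuousLinearMap.smul_apply, smul_eq_mul]; ring)
    (fun m n n' => by simp only [map_add]; ring)
    (fun c m n => by simp only [map_smul, smul_eq_mul]; ring) with hBdef
  have hBapp : ∀ m n : D.X, B m n = aV (D.Gd m) (D.Gd n) + aS (D.P m) (D.P n) :=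
    fun m n => rfl
  set l : D.X →ₗ[ℝ] ℝ := ((f : L →ₗ[ℝ] ℝ).comp D.P) - ((F : Lv →ₗ[ℝ] ℝ).comp D.Gd)
    with hldef
  have hlapp : ∀ v : D.X, l v = f (D.P v) - F (D.Gd v) := fun v => rfl
  have hinj : Function.Injective B := by
    rw [injective_iff_map_eq_zero]
    intro m hm
    refine hker m fun v => ?_
    rw [← hBapp m v, hm]
    rfl
  have hfr : Module.finrank ℝ D.X = Module.finrank ℝ (D.X →ₗ[ℝ] ℝ) :=
    (Subspace.dual_finrank_eq (K := ℝ) (V := D.X)).symm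
  have hsurj := (LinearMap.injective_iff_surjective_of_finrank_eq_finrank hfr).mp hinj
  obtain ⟨u₀, hu₀⟩ := hsurj l
  have hiff : ∀ m : D.X,
      (∀ v, aV (D.Gd m) (D.Gd v) + aS (D.P m) (D.P v) = f (D.P v) - F (D.Gd v)) ↔
      B m = l := by
    intro m
    constructor
    · intro h
      ext v
      rw [hBapp, hlapp, h]
    · intro h v
      rw [← hBapp, ← hlapp, h]
  constructor
  · refine ⟨u₀, (hiff u₀).mpr hu₀, fun y hy => ?_⟩
    have hB : B (y - u₀) = 0 := by
      rw [map_sub, (hiff y).mp hy, hu₀, sub_self]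
    have : y - u₀ = 0 := by
      refine hker _ fun v => ?_
      rw [← hBapp, hB]
      rfl
    rw [← sub_eq_zero]
    exact this
  · intro u hscheme w hpair
    set φ : StrongDual ℝ Lv := aV (G ubar) + F with hφdef
    -- identify w
    have hw : ∀ x : L, w x = aS (ubar : L) x - f x := by
      have hcont1 : Continuous w := w.continuous
      have hcont2 : Continuous fun x : L => aS (ubar : L) x - f x :=
        ((aS (ubar : L)).continuous).sub f.continuous
      have heq : Set.EqOn ⇑w (fun x : L => aS (ubar : L) x - f x) (WG : Set L) := by
        intro x hx
        have h1 := hpair ⟨x, hx⟩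
        have h2 := hubar ⟨x, hx⟩
        rw [hφdef] at h1
        simp only [ContinuousLinearMap.add_apply] at h1
        dsimp only at h1 h2 ⊢
        linarith
      have hfun := Continuous.ext_on hWGdense hcont1 hcont2 heq
      exact fun x => congrFun hfun x
    have hW0 := D.WD_nonneg φ w
    have main : ∀ vD : D.X,
        (‖G ubar - D.Gd u‖ ≤ (1 / alph) * (D.WDdef φ w +
          (abar * (1 + D.CD) + alph) * (‖D.P vD - (ubar : L)‖ + ‖D.Gd vD - G ubar‖))) ∧
        (‖(ubar : L) - D.P u‖ ≤ (1 / alph) * (D.CD * D.WDdef φ w +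
          (D.CD * (1 + D.CD) * abar + alph) *
            (‖D.P vD - (ubar : L)‖ + ‖D.Gd vD - G ubar‖))) := by
      intro vD
      set s := D.dnorm (u - vD) with hsdef
      set a' := ‖D.P vD - (ubar : L)‖ with ha'def
      set b' := ‖D.Gd vD - G ubar‖ with hb'def
      have ha'0 : 0 ≤ a' := norm_nonneg _
      have hb'0 : 0 ≤ b' := norm_nonneg _
      have hs0 : 0 ≤ s := D.dnorm_nonneg _
      have hGz : ‖D.Gd (u - vD)‖ ≤ s := D.norm_Gd_le_dnorm _
      have hPz : ‖D.P (u - vD)‖ ≤ D.CD * s := D.norm_P_le _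
      have hE := D.abs_le_WD φ w (u - vD)
      have hEexp : φ (D.Gd (u - vD)) + w (D.P (u - vD)) =
          aV (G ubar) (D.Gd (u - vD)) + F (D.Gd (u - vD)) +
            (aS (ubar : L) (D.P (u - vD)) - f (D.P (u - vD))) := by
        rw [hw, hφdef]
        simp only [ContinuousLinearMap.add_apply]
      -- the fundamental identity
      have hexp : aV (D.Gd (u - vD)) (D.Gd (u - vD)) + aS (D.P (u - vD)) (D.P (u - vD)) =
          -(φ (D.Gd (u - vD)) + w (D.P (u - vD)))
            + aV (G ubar - D.Gd vD) (D.Gd (u - vD))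
            + aS ((ubar : L) - D.P vD) (D.P (u - vD)) := by
        have hsch := hscheme (u - vD)
        rw [hEexp]
        simp only [map_sub, ContinuousLinearMap.sub_apply] at hsch ⊢
        linarith
      have habs1 : |aV (G ubar - D.Gd vD) (D.Gd (u - vD))| ≤ abar * b' * s := by
        have i1 : ‖aV (G ubar - D.Gd vD) (D.Gd (u - vD))‖ ≤
            ‖aV (G ubar - D.Gd vD)‖ * ‖D.Gd (u - vD)‖ :=
          ContinuousLinearMap.le_opNorm _ _
        have i2 : ‖aV (G ubar - D.Gd vD)‖ ≤ abar * b' := by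
          calc ‖aV (G ubar - D.Gd vD)‖ ≤ ‖aV‖ * ‖G ubar - D.Gd vD‖ := aV.le_opNorm _
            _ ≤ abar * ‖G ubar - D.Gd vD‖ :=
              mul_le_mul_of_nonneg_right haVnorm (norm_nonneg _)
            _ = abar * b' := by rw [hb'def, norm_sub_rev]
        rw [← Real.norm_eq_abs]
        calc ‖aV (G ubar - D.Gd vD) (D.Gd (u - vD))‖ ≤
            ‖aV (G ubar - D.Gd vD)‖ * ‖D.Gd (u - vD)‖ := i1
          _ ≤ (abar * b') * s :=
            mul_le_mul i2 hGz (norm_nonneg _) (mul_nonneg habar0 hb'0)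
      have habs2 : |aS ((ubar : L) - D.P vD) (D.P (u - vD))| ≤ abar * a' * (D.CD * s) := by
        have i1 : ‖aS ((ubar : L) - D.P vD) (D.P (u - vD))‖ ≤
            ‖aS ((ubar : L) - D.P vD)‖ * ‖D.P (u - vD)‖ :=
          ContinuousLinearMap.le_opNorm _ _
        have i2 : ‖aS ((ubar : L) - D.P vD)‖ ≤ abar * a' := by
          calc ‖aS ((ubar : L) - D.P vD)‖ ≤ ‖aS‖ * ‖(ubar : L) - D.P vD‖ := aS.le_opNorm _
            _ ≤ abar * ‖(ubar : L) - D.P vD‖ :=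
              mul_le_mul_of_nonneg_right haSnorm (norm_nonneg _)
            _ = abar * a' := by rw [ha'def, norm_sub_rev]
        rw [← Real.norm_eq_abs]
        calc ‖aS ((ubar : L) - D.P vD) (D.P (u - vD))‖ ≤
            ‖aS ((ubar : L) - D.P vD)‖ * ‖D.P (u - vD)‖ := i1
          _ ≤ (abar * a') * (D.CD * s) :=
            mul_le_mul i2 hPz (norm_nonneg _) (mul_nonneg habar0 ha'0)
      have hco := hcoerX (u - vD)
      rw [hexp] at hco
      have he1 : -(φ (D.Gd (u - vD)) + w (D.P (u - vD))) ≤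
          |φ (D.Gd (u - vD)) + w (D.P (u - vD))| := neg_le_abs _
      have he2 : aV (G ubar - D.Gd vD) (D.Gd (u - vD)) ≤
          |aV (G ubar - D.Gd vD) (D.Gd (u - vD))| := le_abs_self _
      have he3 : aS ((ubar : L) - D.P vD) (D.P (u - vD)) ≤
          |aS ((ubar : L) - D.P vD) (D.P (u - vD))| := le_abs_self _
      have hKs : alph * s ^ 2 ≤ (D.WDdef φ w + abar * (1 + D.CD) * (a' + b')) * s := by
        nlinarith [mul_nonneg (mul_nonneg habar0 hs0) ha'0,
          mul_nonneg (mul_nonneg (mul_nonneg habar0 hs0) hb'0) hCD0]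
      have hK0 : 0 ≤ D.WDdef φ w + abar * (1 + D.CD) * (a' + b') :=
        add_nonneg hW0 (mul_nonneg (mul_nonneg habar0 (by linarith)) (by linarith))
      have hsle : s ≤ (D.WDdef φ w + abar * (1 + D.CD) * (a' + b')) / alph := by
        rcases hs0.lt_or_eq with hpos | hzero
        · rw [le_div_iff₀ halph]
          have h5 : (alph * s) * s ≤ (D.WDdef φ w + abar * (1 + D.CD) * (a' + b')) * s := by
            nlinarith
          have := le_of_mul_le_mul_right h5 hpos
          linarith
        · rw [← hzero]
          exact div_nonneg hK0 halph.le
      constructor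
      · have htri : ‖G ubar - D.Gd u‖ ≤ b' + ‖D.Gd (u - vD)‖ := by
          have heq : G ubar - D.Gd u = -(D.Gd vD - G ubar) - D.Gd (u - vD) := by
            rw [map_sub]; abel
          rw [heq]
          calc ‖-(D.Gd vD - G ubar) - D.Gd (u - vD)‖ ≤
              ‖-(D.Gd vD - G ubar)‖ + ‖D.Gd (u - vD)‖ := norm_sub_le _ _
            _ = b' + ‖D.Gd (u - vD)‖ := by rw [norm_neg]
        have hR1 : (1 / alph) * (D.WDdef φ w + (abar * (1 + D.CD) + alph) * (a' + b')) =
            (D.WDdef φ w + abar * (1 + D.CD) * (a' + b')) / alph + (a' + b') := by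
          field_simp
          ring
        rw [hR1]
        linarith
      · have htri : ‖(ubar : L) - D.P u‖ ≤ a' + ‖D.P (u - vD)‖ := by
          have heq : (ubar : L) - D.P u = -(D.P vD - (ubar : L)) - D.P (u - vD) := by
            rw [map_sub]; abel
          rw [heq]
          calc ‖-(D.P vD - (ubar : L)) - D.P (u - vD)‖ ≤
              ‖-(D.P vD - (ubar : L))‖ + ‖D.P (u - vD)‖ := norm_sub_le _ _
            _ = a' + ‖D.P (u - vD)‖ := by rw [norm_neg]
        have hCs : D.CD * s ≤
            D.CD * ((D.WDdef φ w + abar * (1 + D.CD) * (a' + b')) / alph) :=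
          mul_le_mul_of_nonneg_left hsle hCD0
        have hR2 : (1 / alph) * (D.CD * D.WDdef φ w +
              (D.CD * (1 + D.CD) * abar + alph) * (a' + b')) =
            D.CD * ((D.WDdef φ w + abar * (1 + D.CD) * (a' + b')) / alph) + (a' + b') := by
          field_simp
          ring
        rw [hR2]
        linarith
    haveI : Nonempty D.X := ⟨0⟩
    have hM1 : 0 < abar * (1 + D.CD) + alph :=
      add_pos_of_nonneg_of_pos (mul_nonneg habar0 (by linarith)) halph
    have hM2 : 0 < D.CD * (1 + D.CD) * abar + alph :=
      add_pos_of_nonneg_of_pos (mul_nonneg (mul_nonneg hCD0 (by linarith)) habar0) halph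
    constructor
    · rw [GradDisc.SDdef]
      exact le_affine_sInf halph hM1 fun vD => (main vD).1
    · rw [GradDisc.SDdef]
      exact le_affine_sInf halph hM2 fun vD => (main vD).2
end
end

section
/- Under the linear coercivity assumptions, let (𝒟_m)_{m∈ℕ} be a sequence of gradient discretisations, for each m let u_m ∈ X_{𝒟_m} solve the linear gradient scheme, and let ū be the solution of the weak linear problem. If P_{𝒟_m} u_m converges strongly in L to ū and G_{𝒟_m} u_m converges weakly in 𝐋 to Gū, then G_{𝒟_m} u_m converges strongly in 𝐋 to Gū. -/
open NormedSpace Filter Topology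

noncomputable section

variable {L Lv : Type*} [NormedAddCommGroup L] [NormedSpace ℝ L]
  [NormedAddCommGroup Lv] [NormedSpace ℝ Lv]

theorem strong_convergence_of_gradients
    [CompleteSpace L] [CompleteSpace Lv]
    [TopologicalSpace.SeparableSpace L] [TopologicalSpace.SeparableSpace Lv]
    (hreflL : Function.Surjective ⇑(inclusionInDoubleDual ℝ L))
    (hreflLv : Function.Surjective ⇑(inclusionInDoubleDual ℝ Lv))
    (WG : Submodule ℝ L) (hWGdense : Dense (WG : Set L))
    (G : ↥WG →ₗ[ℝ] Lv)
    (hGclosed : IsClosed (Set.range fun u : ↥WG => ((u : L), G u)))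
    (V : Submodule ℝ (StrongDual ℝ L)) (hVclosed : IsClosed (V : Set (StrongDual ℝ L)))
    (CWGV : ℝ) (hCWGV : 0 < CWGV)
    (hequiv : ∀ u : ↥WG, (‖(u : L)‖ ^ (2:ℝ) + ‖G u‖ ^ (2:ℝ)) ^ (1/2 : ℝ) ≤
      CWGV * (semV V (u : L) ^ (2:ℝ) + ‖G u‖ ^ (2:ℝ)) ^ (1/2 : ℝ))
    (aV : Lv →L[ℝ] StrongDual ℝ Lv) (aS : L →L[ℝ] StrongDual ℝ L)
    (abar : ℝ) (haVnorm : ‖aV‖ ≤ abar) (haSnorm : ‖aS‖ ≤ abar)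
    (alph : ℝ) (halph : 0 < alph)
    (haVcoer : ∀ gv : Lv, alph * ‖gv‖ ^ (2:ℝ) ≤ aV gv gv)
    (haScoer : ∀ v : L, alph * semV V v ^ (2:ℝ) ≤ aS v v)
    (f : StrongDual ℝ L) (F : StrongDual ℝ Lv)
    (D : ℕ → GradDisc L Lv V 2)
    (um : (m : ℕ) → (D m).X)
    (hum : ∀ m : ℕ, ∀ v : (D m).X,
      aV ((D m).Gd (um m)) ((D m).Gd v) + aS ((D m).P (um m)) ((D m).P v)
        = f ((D m).P v) - F ((D m).Gd v))
    (ubar : ↥WG)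
    (hubar : ∀ v : ↥WG,
      aV (G ubar) (G v) + aS (ubar : L) (v : L) = f (v : L) - F (G v))
    (hPconv : Tendsto (fun m => ‖(D m).P (um m) - (ubar : L)‖) atTop (𝓝 0))
    (hGconv : ∀ g : StrongDual ℝ Lv,
      Tendsto (fun m => g ((D m).Gd (um m))) atTop (𝓝 (g (G ubar)))) :
    Tendsto (fun m => ‖(D m).Gd (um m) - G ubar‖) atTop (𝓝 0) := by

  set x := fun m => (D m).Gd (um m) with hx
  set y := fun m => (D m).P (um m) with hydef
  set xb := G ubar
  set yb := (ubar : L)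
  have hy : Tendsto y atTop (𝓝 yb) :=
    tendsto_iff_norm_sub_tendsto_zero.mpr hPconv
  -- the scheme tested with u_m
  have hAm : ∀ m, aV (x m) (x m) = f (y m) - F (x m) - aS (y m) (y m) := by
    intro m
    have := hum m (um m)
    simp only [hx, hydef]
    linarith
  have hfy : Tendsto (fun m => f (y m)) atTop (𝓝 (f yb)) :=
    (f.continuous.tendsto yb).comp hy
  have hFx : Tendsto (fun m => F (x m)) atTop (𝓝 (F xb)) := hGconv F
  have hSy : Tendsto (fun m => aS (y m) (y m)) atTop (𝓝 (aS yb yb)) := by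
    have hc : Continuous fun z : L => aS z z := aS.continuous.clm_apply continuous_id
    exact (hc.tendsto yb).comp hy
  have hbar : aV xb xb = f yb - F xb - aS yb yb := by
    have := hubar ubar
    linarith
  have hA : Tendsto (fun m => aV (x m) (x m)) atTop (𝓝 (aV xb xb)) := by
    have h := (hfy.sub hFx).sub hSy
    rw [show f yb - F xb - aS yb yb = aV xb xb from hbar.symm] at h
    exact h.congr fun m => (hAm m).symm
  have hB : Tendsto (fun m => aV (x m) xb) atTop (𝓝 (aV xb xb)) := by
    have := hGconv (aV.flip xb)
    simpa using this
  have hC : Tendsto (fun m => aV xb (x m)) atTop (𝓝 (aV xb xb)) := hGconv (aV xb)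
  have hlim : Tendsto (fun m => aV (x m - xb) (x m - xb)) atTop (𝓝 0) := by
    have h := ((hA.sub hB).sub hC).add tendsto_const_nhds (b := aV xb xb)
    have h0 : aV xb xb - aV xb xb - aV xb xb + aV xb xb = 0 := by ring
    rw [h0] at h
    refine h.congr fun m => ?_
    simp [map_sub, ContinuousLinearMap.sub_apply]
    ring
  have hsq : Tendsto (fun m => ‖x m - xb‖ ^ 2) atTop (𝓝 0) := by
    have hnn : ∀ m, 0 ≤ ‖x m - xb‖ ^ 2 := fun m => sq_nonneg _
    have hle : ∀ m, ‖x m - xb‖ ^ 2 ≤ (1 / alph) * aV (x m - xb) (x m - xb) := by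
      intro m
      have h1 := haVcoer (x m - xb)
      rw [show ((2:ℝ)) = ((2:ℕ) : ℝ) by norm_num, Real.rpow_natCast] at h1
      rw [one_div, inv_mul_eq_div, le_div_iff₀ halph]
      linarith [h1]
    have h2 : Tendsto (fun m => (1 / alph) * aV (x m - xb) (x m - xb)) atTop (𝓝 0) := by
      simpa using hlim.const_mul (1 / alph)
    exact squeeze_zero hnn hle h2
  have := (Real.continuous_sqrt.tendsto' 0 0 (by simp)).comp hsq
  refine this.congr fun m => ?_
  simp [Real.sqrt_sq (norm_nonneg _)]
  rfl
end
end
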